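/- Let L ≥ 2, h ∈ ℝ^L, φ ∈ ℝ^L, and θ̄_j ∈ {0, π} for each j ∈ {1,…,L}. On (ℂ²)^{⊗L} set H_I[h] = (π/4)Σ_{j=1}^{L} σ^z_j σ^z_{j+1} + Σ_{j=1}^{L} h_j σ^z_j (site indices mod L) and H_K = −(π/4)Σ_{j=1}^{L} σ^x_j. Then there exists c ∈ ℂ with |c| = 1 such that exp(−iH_K)·exp(−iH_I[h]) applied to the longitudinal product state ⊗_{j=1}^{L}(cos(θ̄_j/2)|↑⟩ + e^{iφ_j} sin(θ̄_j/2)|↓⟩) equals c · ⊗_{j=1}^{L} 2^{−1/2}(|↑⟩ + e^{i(π/2−θ̄_j)}|↓⟩); i.e., one Floquet step maps any longitudinal separating product state, up to a global phase, to a transverse separating product state. -/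

import Mathlib

set_option linter.unusedSectionVars false
set_option maxHeartbeats 1000000


/-!
STATEMENT 19: one Floquet step of the self-dual kicked Ising chain maps any longitudinal
separating product state, up to a global phase, to a transverse separating product state.
-/

noncomputable section
open Complex Matrix Finset

abbrev QOp (ι : Type) := Matrix (ι → Fin 2) (ι → Fin 2) ℂ

def pauliX : Matrix (Fin 2) (Fin 2) ℂ := !![0, 1; 1, 0]
def pauliZ : Matrix (Fin 2) (Fin 2) ℂ := !![1, 0; 0, -1]

/-- Single-site operator `M` acting on site `j` (identity elsewhere). -/
def site {ι : Type} [DecidableEq ι] [Fintype ι] (M : Matrix (Fin 2) (Fin 2) ℂ) (j : ι) :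
    QOp ι :=
  Matrix.of fun x y => ∏ k, if k = j then M (x k) (y k) else if x k = y k then (1 : ℂ) else 0

/-- Matrix exponential. -/
abbrev mexp {ι : Type} [DecidableEq ι] [Fintype ι] (A : QOp ι) : QOp ι :=
  NormedSpace.exp A

/-- `H_I[h] = (π/4)Σ_j σ^z_j σ^z_{j+1} + Σ_j h_j σ^z_j` (site indices mod `L`). -/
def HI (L : ℕ) (h : Fin L → ℝ) : QOp (Fin L) :=
  ((Real.pi / 4 : ℝ) : ℂ) • ∑ j : Fin L, site pauliZ j * site pauliZ (finRotate L j)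
    + ∑ j : Fin L, ((h j : ℝ) : ℂ) • site pauliZ j

/-- `H_K = −(π/4)Σ_j σ^x_j`. -/
def HK (L : ℕ) : QOp (Fin L) :=
  ((-(Real.pi / 4) : ℝ) : ℂ) • ∑ j : Fin L, site pauliX j

/-- The product state `⊗_j (cos(θ_j/2)|↑⟩ + e^{iφ_j} sin(θ_j/2)|↓⟩)`
(`↑` is the `σ^z`-eigenvector `0`, `↓` is `1`). -/
def prodState (L : ℕ) (θ φ : Fin L → ℝ) : (Fin L → Fin 2) → ℂ :=
  fun s => ∏ j : Fin L,
    (if s j = 0 then ((Real.cos (θ j / 2) : ℝ) : ℂ)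
      else Complex.exp (Complex.I * ((φ j : ℝ) : ℂ)) * ((Real.sin (θ j / 2) : ℝ) : ℂ))

/-- The transverse separating state `⊗_j 2^{−1/2}(|↑⟩ + e^{iψ_j}|↓⟩)`. -/
def transState (L : ℕ) (ψ : Fin L → ℝ) : (Fin L → Fin 2) → ℂ :=
  fun s => ∏ j : Fin L,
    (((Real.sqrt 2 : ℝ) : ℂ))⁻¹ *
      (if s j = 0 then 1 else Complex.exp (Complex.I * ((ψ j : ℝ) : ℂ)))

namespace Flq
variable {ι : Type} [DecidableEq ι] [Fintype ι]

def tens (f : ι → Matrix (Fin 2) (Fin 2) ℂ) : QOp ι :=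
  Matrix.of fun x y => ∏ j, f j (x j) (y j)

lemma tens_apply (f : ι → Matrix (Fin 2) (Fin 2) ℂ) (x y : ι → Fin 2) :
    tens f x y = ∏ j, f j (x j) (y j) := rfl

lemma tens_congr {f g : ι → Matrix (Fin 2) (Fin 2) ℂ} (h : ∀ k, f k = g k) :
    tens f = tens g := by
  rw [show f = g from funext h]

lemma tens_mul (f g : ι → Matrix (Fin 2) (Fin 2) ℂ) :
    tens f * tens g = tens (fun j => f j * g j) := by
  ext x y
  simp only [Matrix.mul_apply, tens_apply]
  simp_rw [← Finset.prod_mul_distrib]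
  rw [Finset.prod_univ_sum, Fintype.piFinset_univ]

lemma tens_one : tens (fun _ : ι => (1 : Matrix (Fin 2) (Fin 2) ℂ)) = 1 := by
  ext x y
  simp only [tens_apply, Matrix.one_apply]
  by_cases h : x = y
  · subst h; simp
  · obtain ⟨j, hj⟩ := Function.ne_iff.mp h
    rw [Finset.prod_eq_zero (Finset.mem_univ j) (by simp [hj]), if_neg h]

lemma site_eq_tens (M : Matrix (Fin 2) (Fin 2) ℂ) (j : ι) :
    site M j = tens (fun k => if k = j then M else 1) := by
  ext x y
  refine Finset.prod_congr rfl fun k _ => ?_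
  by_cases hk : k = j <;> simp [hk, Matrix.one_apply]

lemma site_one (j : ι) : site (1 : Matrix (Fin 2) (Fin 2) ℂ) j = 1 := by
  rw [site_eq_tens, ← tens_one]
  exact tens_congr fun k => by by_cases hk : k = j <;> simp [hk]

lemma site_mul (M N : Matrix (Fin 2) (Fin 2) ℂ) (j : ι) :
    site M j * site N j = site (M * N) j := by
  rw [site_eq_tens, site_eq_tens, tens_mul, site_eq_tens]
  exact tens_congr fun k => by by_cases hk : k = j <;> simp [hk]

lemma site_comm {j k : ι} (hjk : j ≠ k) (M N : Matrix (Fin 2) (Fin 2) ℂ) :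
    Commute (site M j) (site N k) := by
  unfold Commute SemiconjBy
  rw [site_eq_tens M, site_eq_tens N, tens_mul, tens_mul]
  refine tens_congr fun l => ?_
  by_cases hj : l = j <;> by_cases hk : l = k <;>
    simp [hj, hk, hjk, hjk.symm]

lemma site_smul (c : ℂ) (M : Matrix (Fin 2) (Fin 2) ℂ) (j : ι) :
    site (c • M) j = c • site M j := by
  ext x y
  simp only [site, Matrix.of_apply, Matrix.smul_apply, smul_eq_mul]
  rw [← Finset.mul_prod_erase _ _ (Finset.mem_univ j),
    ← Finset.mul_prod_erase _ (fun k => if k = j then M (x k) (y k) else if x k = y k then (1:ℂ) else 0) (Finset.mem_univ j)]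
  have h1 : (∏ k ∈ Finset.univ.erase j,
      if k = j then c * M (x k) (y k) else if x k = y k then (1:ℂ) else 0)
      = ∏ k ∈ Finset.univ.erase j,
      if k = j then M (x k) (y k) else if x k = y k then (1:ℂ) else 0 := by
    refine Finset.prod_congr rfl fun k hk => ?_
    rw [if_neg (Finset.ne_of_mem_erase hk), if_neg (Finset.ne_of_mem_erase hk)]
  rw [h1]
  simp only [if_pos rfl, if_true, eq_self_iff_true]
  ring

lemma site_diagonal (d : Fin 2 → ℂ) (j : ι) :
    site (Matrix.diagonal d) j = Matrix.diagonal (fun x => d (x j)) := by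
  ext x y
  simp only [site, Matrix.of_apply]
  by_cases h : x = y
  · subst h
    rw [Matrix.diagonal_apply_eq]
    have h1 : (∏ k, if k = j then Matrix.diagonal d (x k) (x k) else if x k = x k then (1:ℂ) else 0)
        = ∏ k, if k = j then d (x k) else (1:ℂ) := by
      refine Finset.prod_congr rfl fun k _ => ?_
      by_cases hk : k = j
      · rw [if_pos hk, if_pos hk, Matrix.diagonal_apply_eq]
      · rw [if_neg hk, if_neg hk, if_pos rfl]
    rw [h1, Finset.prod_ite_eq' Finset.univ j (fun k => d (x k)), if_pos (Finset.mem_univ j)]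
  · obtain ⟨l, hl⟩ := Function.ne_iff.mp h
    rw [Matrix.diagonal_apply_ne _ h, Finset.prod_eq_zero (Finset.mem_univ l)]
    by_cases hlj : l = j
    · rw [if_pos hlj, Matrix.diagonal_apply_ne _ hl]
    · rw [if_neg hlj, if_neg hl]

lemma pauliZ_diag : pauliZ = Matrix.diagonal (fun i : Fin 2 => if i = 0 then (1:ℂ) else -1) := by
  ext i j
  fin_cases i <;> fin_cases j <;> simp [pauliZ]

lemma diagonal_sum {κ : Type*} (s : Finset κ) (f : κ → (ι → Fin 2) → ℂ) :
    (∑ k ∈ s, Matrix.diagonal (f k)) = Matrix.diagonal (fun x => ∑ k ∈ s, f k x) := by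
  ext x y
  by_cases h : x = y
  · subst h; simp [Matrix.sum_apply]
  · simp [Matrix.sum_apply, Matrix.diagonal_apply_ne _ h]

end Flq

namespace Flq
variable {ι : Type} [DecidableEq ι] [Fintype ι]

lemma noncommProd_site (V : Matrix (Fin 2) (Fin 2) ℂ) :
    ∀ (t : Finset ι) (hc : (t : Set ι).Pairwise (Function.onFun Commute fun j => site V j)),
      t.noncommProd (fun j => site V j) hc = tens (fun k => if k ∈ t then V else 1) := by
  intro t
  induction t using Finset.induction_on with
  | empty =>
    intro hc
    rw [Finset.noncommProd_empty, ← tens_one]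
    exact (tens_congr (by simp)).symm
  | @insert a s ha ih =>
    intro hc
    rw [Finset.noncommProd_insert_of_notMem _ _ _ _ ha, ih _, site_eq_tens, tens_mul]
    refine tens_congr fun k => ?_
    by_cases hk : k = a
    · subst hk; simp [ha]
    · by_cases hks : k ∈ s <;> simp [hk, hks, Finset.mem_insert]

/-- the 2×2 diagonalizing matrix -/
def Pm : Matrix (Fin 2) (Fin 2) ℂ := !![1, 1; 1, -1]
def Pinv : Matrix (Fin 2) (Fin 2) ℂ := (2:ℂ)⁻¹ • !![1, 1; 1, -1]

/-- the one-site kick unitary -/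
def Uk : Matrix (Fin 2) (Fin 2) ℂ :=
  ((Real.sqrt 2 : ℝ) : ℂ)⁻¹ • !![1, Complex.I; Complex.I, 1]

lemma Pm_mul_Pinv : Pm * Pinv = 1 := by
  ext i j
  fin_cases i <;> fin_cases j <;>
    simp [Pm, Pinv, Matrix.mul_apply, Fin.sum_univ_two, Matrix.one_apply] <;> norm_num

lemma Pinv_mul_Pm : Pinv * Pm = 1 := by
  ext i j
  fin_cases i <;> fin_cases j <;>
    simp [Pm, Pinv, Matrix.mul_apply, Fin.sum_univ_two, Matrix.one_apply] <;> norm_num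

lemma isUnit_Pm : IsUnit Pm :=
  ⟨⟨Pm, Pinv, Pm_mul_Pinv, Pinv_mul_Pm⟩, rfl⟩

lemma Pm_inv : Pm⁻¹ = Pinv := Matrix.inv_eq_right_inv Pm_mul_Pinv

lemma diag2 (a b : ℂ) : Matrix.diagonal ![a, b] = !![a, 0; 0, b] := by
  ext i j
  fin_cases i <;> fin_cases j <;>
    simp [Matrix.diagonal_apply]

lemma pauliX_decomp (a : ℂ) :
    a • pauliX = Pm * Matrix.diagonal ![a, -a] * Pinv := by
  rw [diag2]
  ext i j
  fin_cases i <;> fin_cases j <;>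
    simp [Pm, Pinv, pauliX, Matrix.mul_apply, Fin.sum_univ_two] <;> ring

lemma sqrt2_sq : ((Real.sqrt 2 : ℝ) : ℂ) * ((Real.sqrt 2 : ℝ) : ℂ) = 2 := by
  rw [← Complex.ofReal_mul, Real.mul_self_sqrt (by norm_num)]
  norm_num

lemma sqrt2_ne : ((Real.sqrt 2 : ℝ) : ℂ) ≠ 0 := by
  intro hs
  have h := sqrt2_sq
  rw [hs, mul_zero] at h
  norm_num at h

lemma sqrt2_inv : ((Real.sqrt 2 : ℝ) : ℂ)⁻¹ = ((Real.sqrt 2 : ℝ) : ℂ) / 2 := by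
  rw [inv_eq_one_div, div_eq_div_iff sqrt2_ne two_ne_zero, one_mul]
  exact sqrt2_sq.symm

lemma exp_pi4 : Complex.exp (Complex.I * ((Real.pi / 4 : ℝ) : ℂ))
    = ((Real.sqrt 2 : ℝ) : ℂ) / 2 + (((Real.sqrt 2 : ℝ) : ℂ) / 2) * Complex.I := by
  rw [mul_comm, Complex.exp_mul_I, ← Complex.ofReal_cos, ← Complex.ofReal_sin,
    Real.cos_pi_div_four, Real.sin_pi_div_four]
  push_cast
  ring

lemma exp_neg_pi4 : Complex.exp (-(Complex.I * ((Real.pi / 4 : ℝ) : ℂ)))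
    = ((Real.sqrt 2 : ℝ) : ℂ) / 2 - (((Real.sqrt 2 : ℝ) : ℂ) / 2) * Complex.I := by
  rw [show -(Complex.I * ((Real.pi / 4 : ℝ) : ℂ)) = ((-(Real.pi / 4) : ℝ) : ℂ) * Complex.I by
    push_cast; ring]
  rw [Complex.exp_mul_I, ← Complex.ofReal_cos, ← Complex.ofReal_sin,
    Real.cos_neg, Real.sin_neg, Real.cos_pi_div_four, Real.sin_pi_div_four]
  push_cast
  ring

lemma Uk_eq : Pm * Matrix.diagonal
      ![Complex.exp (Complex.I * ((Real.pi / 4 : ℝ) : ℂ)),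
        Complex.exp (-(Complex.I * ((Real.pi / 4 : ℝ) : ℂ)))] * Pinv = Uk := by
  rw [exp_pi4, exp_neg_pi4, diag2]
  ext i j
  fin_cases i <;> fin_cases j <;>
    simp [Pm, Pinv, Uk, Matrix.mul_apply, Fin.sum_univ_two, sqrt2_inv] <;>
    ring

end Flq

namespace Flq
variable {ι : Type} [DecidableEq ι] [Fintype ι]

lemma exp_site_kick (L : ℕ) (j : Fin L) :
    NormedSpace.exp (site ((Complex.I * ((Real.pi/4 : ℝ) : ℂ)) • pauliX) j) = site Uk j := by
  set a := Complex.I * ((Real.pi/4 : ℝ) : ℂ) with ha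
  have hp1 : site Pm j * site Pinv j = (1 : QOp (Fin L)) := by
    rw [site_mul, Pm_mul_Pinv, site_one]
  have hp2 : site Pinv j * site Pm j = (1 : QOp (Fin L)) := by
    rw [site_mul, Pinv_mul_Pm, site_one]
  have hinv : (site Pm j : QOp (Fin L))⁻¹ = site Pinv j := Matrix.inv_eq_right_inv hp1
  have hu : IsUnit (site Pm j : QOp (Fin L)) := ⟨⟨site Pm j, site Pinv j, hp1, hp2⟩, rfl⟩
  rw [pauliX_decomp a, ← site_mul, ← site_mul, ← hinv, Matrix.exp_conj _ _ hu, hinv]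
  rw [site_diagonal, Matrix.exp_diagonal]
  have hexpfun : NormedSpace.exp (fun x : Fin L → Fin 2 => (![a, -a]) (x j))
      = fun x : Fin L → Fin 2 => (![Complex.exp a, Complex.exp (-a)]) (x j) := by
    funext x
    rw [Pi.coe_exp, ← Complex.exp_eq_exp_ℂ]
    have hx : x j = 0 ∨ x j = 1 := by omega
    rcases hx with hx | hx <;> rw [hx] <;> simp
  rw [hexpfun, show (Matrix.diagonal fun x : Fin L → Fin 2 =>
      (![Complex.exp a, Complex.exp (-a)]) (x j))
      = site (Matrix.diagonal ![Complex.exp a, Complex.exp (-a)]) j from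
      (site_diagonal _ j).symm]
  rw [site_mul, site_mul, Uk_eq]

lemma exp_HK (L : ℕ) :
    NormedSpace.exp ((-Complex.I) • HK L) = tens (fun _ : Fin L => Uk) := by
  have h1 : (-Complex.I) • HK L
      = ∑ j : Fin L, site ((Complex.I * ((Real.pi/4 : ℝ) : ℂ)) • pauliX) j := by
    rw [HK, smul_smul, Finset.smul_sum]
    refine Finset.sum_congr rfl fun j _ => ?_
    rw [site_smul]
    congr 1
    push_cast
    ring
  rw [h1, Matrix.exp_sum_of_commute _ _ (fun j _ k _ hjk => site_comm hjk _ _)]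
  rw [Finset.noncommProd_congr rfl (fun j _ => exp_site_kick L j)
    (fun j _ k _ hjk => Commute.exp (site_comm hjk _ _))]
  rw [noncommProd_site Uk Finset.univ (fun j _ k _ hjk => site_comm hjk _ _)]
  exact tens_congr fun k => by simp

def zc : Fin 2 → ℂ := fun i => if i = 0 then 1 else -1

/-- classical Ising energy of a spin configuration -/
def Er (L : ℕ) (h : Fin L → ℝ) : (Fin L → Fin 2) → ℝ := fun x =>
  Real.pi/4 * ∑ j : Fin L,
      (if x j = 0 then (1:ℝ) else -1) * (if x (finRotate L j) = 0 then (1:ℝ) else -1)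
    + ∑ j : Fin L, h j * (if x j = 0 then (1:ℝ) else -1)

lemma smul_diagonal' (c : ℂ) (v : (ι → Fin 2) → ℂ) :
    c • Matrix.diagonal v = Matrix.diagonal (fun x => c * v x) := by
  ext x y
  by_cases h : x = y
  · subst h; simp
  · simp [Matrix.diagonal_apply_ne _ h]

lemma HI_diag (L : ℕ) (h : Fin L → ℝ) :
    HI L h = Matrix.diagonal (fun x => ((Er L h x : ℝ) : ℂ)) := by
  have hz : ∀ j : Fin L, site pauliZ j
      = Matrix.diagonal (fun x : Fin L → Fin 2 => zc (x j)) := fun j => by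
    rw [pauliZ_diag]; exact site_diagonal _ j
  rw [HI]
  rw [show (∑ j : Fin L, site pauliZ j * site pauliZ (finRotate L j))
      = Matrix.diagonal (fun x => ∑ j : Fin L, zc (x j) * zc (x (finRotate L j))) from by
    simp_rw [hz, Matrix.diagonal_mul_diagonal]
    exact diagonal_sum _ _]
  rw [show (∑ j : Fin L, ((h j : ℝ) : ℂ) • site pauliZ j)
      = Matrix.diagonal (fun x => ∑ j : Fin L, ((h j : ℝ) : ℂ) * zc (x j)) from by
    simp_rw [hz, smul_diagonal']
    exact diagonal_sum _ _]
  rw [smul_diagonal', Matrix.diagonal_add]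
  congr 1
  funext x
  simp only [Er, zc]
  push_cast [apply_ite Complex.ofReal]
  rfl

lemma exp_HI (L : ℕ) (h : Fin L → ℝ) :
    NormedSpace.exp ((-Complex.I) • HI L h)
      = Matrix.diagonal (fun x => Complex.exp (-Complex.I * ((Er L h x : ℝ) : ℂ))) := by
  rw [HI_diag, smul_diagonal', Matrix.exp_diagonal,
    show (NormedSpace.exp fun x => -Complex.I * ((Er L h x : ℝ) : ℂ))
      = fun x => Complex.exp (-Complex.I * ((Er L h x : ℝ) : ℂ)) from
      funext fun x => by rw [Pi.coe_exp, ← Complex.exp_eq_exp_ℂ]]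

end Flq

/-- **One Floquet step maps longitudinal separating states to transverse separating
states up to a global phase.** -/
theorem floquet_maps_longitudinal_to_transverse (L : ℕ) (hL : 2 ≤ L)
    (h φ θb : Fin L → ℝ) (hθ : ∀ j, θb j = 0 ∨ θb j = Real.pi) :
    ∃ c : ℂ, ‖c‖ = 1 ∧
      (mexp ((-Complex.I) • HK L) * mexp ((-Complex.I) • HI L h)).mulVec
          (prodState L θb φ)
        = c • transState L (fun j => Real.pi / 2 - θb j) := by
  classical
  set s0 : Fin L → Fin 2 := fun j => if θb j = 0 then 0 else 1 with hs0
  set a0 : ℂ := ∏ j : Fin L, (if θb j = 0 then (1:ℂ)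
      else Complex.exp (Complex.I * ((φ j : ℝ) : ℂ))) with ha0
  have hfin2 : ∀ i : Fin 2, i = 0 ∨ i = 1 := by decide
  have hfin2' : ∀ i : Fin 2, i ≠ 1 → i = 0 := by decide
  have hpi0 : Real.pi ≠ 0 := Real.pi_ne_zero
  have hprod : prodState L θb φ = fun s => if s = s0 then a0 else 0 := by
    funext s
    by_cases hs : s = s0
    · subst hs
      rw [if_pos rfl, prodState, ha0]
      refine Finset.prod_congr rfl fun j _ => ?_
      rcases hθ j with h0 | hpi
      · have h1 : s0 j = 0 := by simp [hs0, h0]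
        rw [if_pos h1, if_pos h0, h0]
        norm_num
      · have hne : θb j ≠ 0 := by rw [hpi]; exact hpi0
        have h1 : s0 j = 1 := by simp [hs0, hne]
        rw [h1, if_neg (by decide : (1 : Fin 2) ≠ 0), if_neg hne, hpi]
        norm_num [Real.sin_pi_div_two]
    · rw [if_neg hs, prodState]
      obtain ⟨j, hj⟩ := Function.ne_iff.mp hs
      refine Finset.prod_eq_zero (Finset.mem_univ j) ?_
      rcases hθ j with h0 | hpi
      · have h1 : s j ≠ 0 := by simpa [hs0, h0] using hj
        rw [if_neg h1, h0]
        norm_num [Real.sin_zero]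
      · have hne : θb j ≠ 0 := by rw [hpi]; exact hpi0
        have h2 : s0 j = 1 := by simp [hs0, hne]
        have h1 : s j = 0 := hfin2' _ (by rw [← h2]; exact hj)
        rw [if_pos h1, hpi]
        norm_num [Real.cos_pi_div_two]
  set cph : ℂ := ∏ j : Fin L, (if θb j = 0 then (1:ℂ) else Complex.I) with hcph
  set ee : ℂ := Complex.exp (-Complex.I * ((Flq.Er L h s0 : ℝ) : ℂ)) with hee
  refine ⟨a0 * ee * cph, ?_, ?_⟩
  · rw [norm_mul, norm_mul]
    have h1 : ‖a0‖ = 1 := by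
      rw [ha0, norm_prod]
      refine Finset.prod_eq_one fun j _ => ?_
      split_ifs <;> simp [Complex.norm_exp]
    have h2 : ‖ee‖ = 1 := by
      rw [hee]
      simp [Complex.norm_exp]
    have h3 : ‖cph‖ = 1 := by
      rw [hcph, norm_prod]
      refine Finset.prod_eq_one fun j _ => ?_
      split_ifs <;> simp
    rw [h1, h2, h3]
    norm_num
  · show (NormedSpace.exp ((-Complex.I) • HK L) * NormedSpace.exp ((-Complex.I) • HI L h)).mulVec
        (prodState L θb φ) = _
    rw [← Matrix.mulVec_mulVec, Flq.exp_HI, Flq.exp_HK, hprod]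
    funext x
    have hIexp : Complex.exp (Complex.I * ((Real.pi / 2 : ℝ) : ℂ)) = Complex.I := by
      rw [mul_comm, Complex.exp_mul_I, ← Complex.ofReal_cos, ← Complex.ofReal_sin,
        Real.cos_pi_div_two, Real.sin_pi_div_two]
      simp
    have hnegIexp : Complex.exp (Complex.I * ((Real.pi / 2 - Real.pi : ℝ) : ℂ)) = -Complex.I := by
      rw [show Complex.I * ((Real.pi / 2 - Real.pi : ℝ) : ℂ)
          = ((-(Real.pi / 2) : ℝ) : ℂ) * Complex.I by push_cast; ring]
      rw [Complex.exp_mul_I, ← Complex.ofReal_cos, ← Complex.ofReal_sin, Real.cos_neg,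
        Real.sin_neg, Real.cos_pi_div_two, Real.sin_pi_div_two]
      push_cast
      ring
    -- LHS: mulVec computations
    have hinner : ∀ y, ((Matrix.diagonal fun z => Complex.exp
          (-Complex.I * ((Flq.Er L h z : ℝ) : ℂ))).mulVec
          (fun s => if s = s0 then a0 else 0)) y
        = if y = s0 then ee * a0 else 0 := by
      intro y
      rw [Matrix.mulVec_diagonal]
      by_cases hy : y = s0
      · subst hy; rw [if_pos rfl, if_pos rfl, hee]
      · rw [if_neg hy, if_neg hy, mul_zero]
    have houter : ((Flq.tens fun _ : Fin L => Flq.Uk).mulVec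
          ((Matrix.diagonal fun z => Complex.exp
            (-Complex.I * ((Flq.Er L h z : ℝ) : ℂ))).mulVec
            (fun s => if s = s0 then a0 else 0))) x
        = (∏ j : Fin L, Flq.Uk (x j) (s0 j)) * (ee * a0) := by
      have hmv : ∀ w : (Fin L → Fin 2) → ℂ,
          ((Flq.tens fun _ : Fin L => Flq.Uk).mulVec w) x
          = ∑ y, (∏ j : Fin L, Flq.Uk (x j) (y j)) * w y := fun w => rfl
      rw [hmv, Finset.sum_eq_single s0]
      · rw [hinner, if_pos rfl]
      · intro y _ hy
        rw [hinner, if_neg hy, mul_zero]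
      · intro habs; exact absurd (Finset.mem_univ s0) habs
    rw [houter]
    have hsplit : (∏ j : Fin L, Flq.Uk (x j) (s0 j))
        = cph * transState L (fun j => Real.pi / 2 - θb j) x := by
      rw [hcph, transState, ← Finset.prod_mul_distrib]
      refine Finset.prod_congr rfl fun j _ => ?_
      rcases hθ j with h0 | hpi
      · have h1 : s0 j = 0 := by simp [hs0, h0]
        rw [h1, if_pos h0, one_mul, h0]
        rcases hfin2 (x j) with hx | hx <;> rw [hx]
        · rw [if_pos rfl]
          simp [Flq.Uk]
        · rw [if_neg (by decide : (1 : Fin 2) ≠ 0)]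
          rw [show Real.pi / 2 - 0 = Real.pi / 2 by ring, hIexp]
          simp [Flq.Uk]
      · have hne : θb j ≠ 0 := by rw [hpi]; exact hpi0
        have h1 : s0 j = 1 := by simp [hs0, hne]
        rw [h1, if_neg hne, hpi]
        rcases hfin2 (x j) with hx | hx <;> rw [hx]
        · rw [if_pos rfl]
          simp [Flq.Uk]
          ring
        · rw [if_neg (by decide : (1 : Fin 2) ≠ 0), hnegIexp]
          simp [Flq.Uk]
          linear_combination (((Real.sqrt 2 : ℝ) : ℂ))⁻¹ * Complex.I_mul_I
    rw [hsplit]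
    rw [show (((a0 * ee * cph) • transState L fun j => Real.pi / 2 - θb j) x)
      = (a0 * ee * cph) * transState L (fun j => Real.pi / 2 - θb j) x from rfl]
    ring
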